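/- Let I and J be ideals of R with J proper, I nonzero, and I contained in the radical of J. Then the sequence (ν_I^J(p^e)/p^e)_{e≥0} converges as e → ∞, and its limit — the F-threshold c^J(I) of I with respect to J — is a rational number. -/

import Mathlib

open Filter

/-- The `q`-th Frobenius power of an ideal `J`:
the ideal generated by the `q`-th powers of the elements of `J`. -/
def frobeniusPower {R : Type*} [CommSemiring R] (J : Ideal R) (q : ℕ) : Ideal R :=
  Ideal.span ((· ^ q) '' (J : Set R))

/-- `ν_I^J(p^e)`, the largest `n` with `I ^ n ⊄ J^{[p^e]}` (and `0` if there is no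
such `n`). -/
noncomputable def nuIJ (p : ℕ) {R : Type*} [CommSemiring R] (I J : Ideal R) (e : ℕ) : ℕ :=
  sSup {n : ℕ | ¬ I ^ n ≤ frobeniusPower J (p ^ e)}

namespace FThreshAux

open MvPolynomial Pointwise

variable {K : Type*} [Field K] [Fintype K] {p : ℕ} [hpf : Fact p.Prime] [CharP K p] {m : ℕ}

/-- inverse Frobenius on `K` -/
noncomputable def phi (K : Type*) [Field K] [Fintype K] (p : ℕ) [Fact p.Prime] [CharP K p] :
    K ≃+* K := (frobeniusEquiv K p).symm

lemma phi_pow (k : K) : phi K p (k ^ p) = k := by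
  have := frobeniusEquiv_symm_apply_frobenius K p k
  simpa [phi, frobenius_def] using this

lemma pow_phi (k : K) : (phi K p k) ^ p = k := by
  have := frobenius_apply_frobeniusEquiv_symm K p k
  simpa [phi, frobenius_def] using this

/-- coordinatewise floor division of an exponent vector by `p` -/
noncomputable def bdiv (p : ℕ) (b : Fin m →₀ ℕ) : Fin m →₀ ℕ :=
  Finsupp.mapRange (· / p) (Nat.zero_div p) b

@[simp] lemma bdiv_apply (b : Fin m →₀ ℕ) (i : Fin m) : bdiv p b i = b i / p :=
  Finsupp.mapRange_apply

/-- an exponent vector with entries `< p`, as a finsupp -/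
noncomputable def aF (p : ℕ) (a : Fin m → Fin p) : Fin m →₀ ℕ :=
  Finsupp.equivFunOnFinite.symm (fun i => (a i : ℕ))

@[simp] lemma aF_apply (a : Fin m → Fin p) (i : Fin m) : aF p a i = (a i : ℕ) := rfl

lemma key_arith (u b : Fin m →₀ ℕ) (a : Fin m → Fin p) :
    b = p • u + aF p a ↔ ((∀ i, b i % p = (a i : ℕ)) ∧ bdiv p b = u) := by
  constructor
  · rintro rfl
    constructor
    · intro i
      simp [Nat.mul_add_mod]
      exact Nat.mod_eq_of_lt (a i).2
    · ext i
      simp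
      rw [Nat.mul_add_div hpf.out.pos, Nat.div_eq_of_lt (a i).2, add_zero]
  · rintro ⟨h1, rfl⟩
    ext i
    simp [← h1 i]
    exact (Nat.div_add_mod (b i) p).symm

/-- the `a`-th semilinear component of a polynomial:
`f = ∑ a (pia a f)^p * X^a`. -/
noncomputable def pia (a : Fin m → Fin p) (f : MvPolynomial (Fin m) K) :
    MvPolynomial (Fin m) K :=
  ∑ b ∈ f.support,
    if (∀ i, b i % p = (a i : ℕ)) then monomial (bdiv p b) (phi K p (coeff b f)) else 0

lemma coeff_pia (a : Fin m → Fin p) (f : MvPolynomial (Fin m) K) (u : Fin m →₀ ℕ) :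
    coeff u (pia a f) = phi K p (coeff (p • u + aF p a) f) := by
  classical
  have hb : ∀ b : Fin m →₀ ℕ,
      coeff u (if (∀ i, b i % p = (a i : ℕ)) then
          monomial (bdiv p b) (phi K p (coeff b f)) else 0)
        = if b = p • u + aF p a then phi K p (coeff b f) else 0 := by
    intro b
    by_cases h1 : ∀ i, b i % p = (a i : ℕ)
    · rw [if_pos h1, coeff_monomial]
      by_cases h2 : b = p • u + aF p a
      · rw [if_pos ((key_arith u b a).1 h2).2, if_pos h2]
      · rw [if_neg (fun hdiv => h2 ((key_arith u b a).2 ⟨h1, hdiv⟩)), if_neg h2]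
    · rw [if_neg h1, coeff_zero, if_neg (fun h2 => h1 ((key_arith u b a).1 h2).1)]
  rw [pia, coeff_sum]
  simp_rw [hb]
  rw [Finset.sum_ite_eq' f.support (p • u + aF p a) (fun b => phi K p (coeff b f))]
  split_ifs with h
  · rfl
  · rw [notMem_support_iff.1 h, map_zero]

lemma pia_add (a : Fin m → Fin p) (f g : MvPolynomial (Fin m) K) :
    pia a (f + g) = pia a f + pia a g := by
  ext u
  simp [coeff_pia, coeff_add, map_add]

@[simp] lemma pia_zero (a : Fin m → Fin p) : pia a (0 : MvPolynomial (Fin m) K) = 0 := by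
  simp [pia]

lemma pia_monomial (a : Fin m → Fin p) (b : Fin m →₀ ℕ) (k : K) :
    pia a (monomial b k) =
      if (∀ i, b i % p = (a i : ℕ)) then monomial (bdiv p b) (phi K p k) else 0 := by
  classical
  ext u
  rw [coeff_pia, coeff_monomial]
  by_cases h1 : ∀ i, b i % p = (a i : ℕ)
  · rw [if_pos h1, coeff_monomial]
    by_cases h2 : b = p • u + aF p a
    · rw [if_pos h2, if_pos ((key_arith u b a).1 h2).2]
    · rw [if_neg h2, map_zero, if_neg (fun hdiv => h2 ((key_arith u b a).2 ⟨h1, hdiv⟩))]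
  · rw [if_neg h1, coeff_zero, if_neg (fun h2 => h1 ((key_arith u b a).1 h2).1), map_zero]

/-- semilinearity of the components -/
lemma pia_semilinear (a : Fin m → Fin p) (f g : MvPolynomial (Fin m) K) :
    pia a (f ^ p * g) = f * pia a g := by
  classical
  induction f using MvPolynomial.induction_on' with
  | monomial b' k' =>
    induction g using MvPolynomial.induction_on' with
    | monomial b k =>
      rw [monomial_pow, monomial_mul, pia_monomial, pia_monomial]
      have hcond : (∀ i, (p • b' + b) i % p = (a i : ℕ)) ↔ (∀ i, b i % p = (a i : ℕ)) := by
        apply forall_congr'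
        intro i
        simp [Nat.mul_add_mod]
      by_cases h1 : ∀ i, b i % p = (a i : ℕ)
      · have hexp : bdiv p (p • b' + b) = b' + bdiv p b := by
          ext i
          simp only [bdiv_apply, Finsupp.add_apply, Finsupp.smul_apply, smul_eq_mul]
          rw [Nat.mul_add_div hpf.out.pos]
        rw [if_pos (hcond.2 h1), if_pos h1, monomial_mul, hexp, map_mul, phi_pow]
      · rw [if_neg (fun h => h1 (hcond.1 h)), if_neg h1, mul_zero]
    | add q r hq hr => rw [mul_add, pia_add, pia_add, mul_add, hq, hr]
  | add q r hq hr =>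
    rw [add_pow_char, add_mul, pia_add, hq, hr, add_mul]

lemma pia_pth_power (a : Fin m → Fin p) (f : MvPolynomial (Fin m) K) :
    pia a (f ^ p) = f * pia a 1 := by
  rw [← mul_one (f ^ p), pia_semilinear]

/-- the component decomposition of a polynomial -/
lemma pia_decomp (f : MvPolynomial (Fin m) K) :
    ∑ a : Fin m → Fin p, monomial (aF p a) 1 * (pia a f) ^ p = f := by
  classical
  induction f using MvPolynomial.induction_on' with
  | monomial b k =>
    have ha0 : ∀ i, b i % p < p := fun i => Nat.mod_lt _ hpf.out.pos
    rw [Finset.sum_eq_single (fun i => (⟨b i % p, ha0 i⟩ : Fin p))]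
    · have hexp : aF p (fun i => (⟨b i % p, ha0 i⟩ : Fin p)) + p • bdiv p b = b := by
        ext i
        simp only [aF_apply, Finsupp.add_apply, Finsupp.smul_apply, smul_eq_mul, bdiv_apply]
        exact Nat.mod_add_div _ _
      rw [pia_monomial, if_pos (fun i => rfl), monomial_pow, pow_phi, monomial_mul, one_mul, hexp]
    · intro a _ ha
      rw [pia_monomial, if_neg, zero_pow hpf.out.ne_zero, mul_zero]
      intro hc
      apply ha
      funext i
      exact (Fin.ext (hc i).symm)
    · intro h
      exact absurd (Finset.mem_univ _) h
  | add q r hq hr =>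
    simp only [pia_add, add_pow_char, mul_add, Finset.sum_add_distrib, hq, hr]

lemma pia_one (a : Fin m → Fin p) (ha : ∀ i, (a i : ℕ) = 0) :
    pia a (1 : MvPolynomial (Fin m) K) = 1 := by
  have h1 : (1 : MvPolynomial (Fin m) K) = monomial 0 1 := by
    rw [← C_apply, C_1]
  rw [h1, pia_monomial, if_pos]
  · rw [map_one]
    congr 1
    ext i
    simp [bdiv]
  · intro i
    simp [ha i]

lemma pia_totalDegree (a : Fin m → Fin p) (f : MvPolynomial (Fin m) K) :
    (pia a f).totalDegree ≤ f.totalDegree / p := by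
  classical
  rw [pia]
  refine (totalDegree_finset_sum _ _).trans (Finset.sup_le fun b hb => ?_)
  split_ifs with h1
  · refine (totalDegree_monomial_le _ _).trans ?_
    rw [Nat.le_div_iff_mul_le hpf.out.pos]
    refine le_trans ?_ (le_totalDegree hb)
    rw [Finsupp.sum_fintype _ _ (fun i => rfl), Finsupp.sum_fintype _ _ (fun i => rfl),
      Finset.sum_mul]
    refine Finset.sum_le_sum fun i _ => ?_
    simp only [bdiv_apply, id]
    exact Nat.div_mul_le_self _ _
  · simp

/-- membership in the `p`-th Frobenius power, via components -/
lemma mem_fp_iff (A : Ideal (MvPolynomial (Fin m) K)) (v : MvPolynomial (Fin m) K) :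
    v ∈ frobeniusPower A p ↔ ∀ a : Fin m → Fin p, pia a v ∈ A := by
  constructor
  · intro hv a
    have key : ∀ w ∈ frobeniusPower A p, ∀ g : MvPolynomial (Fin m) K, pia a (g * w) ∈ A := by
      intro w hw
      refine Submodule.span_induction ?_ ?_ ?_ ?_ hw
      · rintro x ⟨y, hy, rfl⟩ g
        rw [show g * y ^ p = y ^ p * g from mul_comm _ _, pia_semilinear]
        exact Ideal.mul_mem_right _ _ hy
      · intro g
        rw [mul_zero, pia_zero]
        exact Ideal.zero_mem _
      · intro x y hx hy ihx ihy g
        rw [mul_add, pia_add]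
        exact Ideal.add_mem _ (ihx g) (ihy g)
      · intro r x hx ihx g
        rw [smul_eq_mul, ← mul_assoc]
        exact ihx (g * r)
    have := key v hv 1
    rwa [one_mul] at this
  · intro h
    have hd := pia_decomp (p := p) (f := v)
    rw [← hd]
    refine Ideal.sum_mem _ fun a _ => ?_
    exact Ideal.mul_mem_left _ _ (Ideal.subset_span ⟨pia a v, h a, rfl⟩)

lemma fp_succ (J : Ideal (MvPolynomial (Fin m) K)) (e : ℕ) :
    frobeniusPower J (p ^ (e + 1)) = frobeniusPower (frobeniusPower J (p ^ e)) p := by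
  apply le_antisymm
  · apply Ideal.span_le.2
    rintro x ⟨y, hy, rfl⟩
    show y ^ p ^ (e + 1) ∈ frobeniusPower (frobeniusPower J (p ^ e)) p
    have h1 : y ^ p ^ (e + 1) = (y ^ p ^ e) ^ p := by rw [← pow_mul, pow_succ]
    rw [h1]
    exact Ideal.subset_span ⟨y ^ p ^ e, Ideal.subset_span ⟨y, hy, rfl⟩, rfl⟩
  · apply Ideal.span_le.2
    rintro x ⟨y, hy, rfl⟩
    show y ^ p ∈ frobeniusPower J (p ^ (e + 1))
    refine Submodule.span_induction ?_ ?_ ?_ ?_ hy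
    · rintro z ⟨w, hw, rfl⟩
      have h2 : (w ^ p ^ e) ^ p = w ^ p ^ (e + 1) := by rw [← pow_mul, pow_succ]
      rw [h2]
      exact Ideal.subset_span ⟨w, hw, rfl⟩
    · rw [zero_pow hpf.out.ne_zero]
      exact Ideal.zero_mem _
    · intro v w hv hw ihv ihw
      rw [add_pow_char]
      exact Ideal.add_mem _ ihv ihw
    · intro r v hv ihv
      rw [smul_eq_mul, mul_pow]
      exact Ideal.mul_mem_left _ _ ihv

omit [Fintype K] hpf [CharP K p] in
lemma fp_zero {R : Type*} [CommSemiring R] (J : Ideal R) (q : ℕ) : frobeniusPower J (q ^ 0) = J := by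
  simp [frobeniusPower, Ideal.span_eq]

omit [Fintype K] hpf [CharP K p] in
lemma fp_le {R : Type*} [CommSemiring R] (J : Ideal R) (q : ℕ) (hq : q ≠ 0) :
    frobeniusPower J q ≤ J := by
  apply Ideal.span_le.2
  rintro x ⟨y, hy, rfl⟩
  obtain ⟨k, rfl⟩ : ∃ k, q = k + 1 := ⟨q - 1, by omega⟩
  show y ^ (k + 1) ∈ J
  rw [pow_succ]
  exact Ideal.mul_mem_left _ _ hy

omit [Fintype K] hpf [CharP K p] in
/-- products of powers of ideal elements lie in the expected power of the ideal -/
lemma prod_pow_mem {R : Type*} [CommRing R] (I : Ideal R) {α : Type*} (t : Finset α)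
    (f : α → R) (n : α → ℕ) (h : ∀ y ∈ t, f y ∈ I ^ n y) :
    (∏ y ∈ t, f y) ∈ I ^ (∑ y ∈ t, n y) := by
  classical
  induction t using Finset.induction_on with
  | empty => simp
  | insert _ _ hx ih =>
    rw [Finset.prod_insert hx, Finset.sum_insert hx, pow_add]
    exact Ideal.mul_mem_mul (h _ (Finset.mem_insert_self _ _))
      (ih fun y hy => h y (Finset.mem_insert_of_mem hy))

omit [Fintype K] hpf [CharP K p] in
lemma span_set_pow {R : Type*} [CommSemiring R] (t : Set R) (N : ℕ) :
    Ideal.span (t ^ N) = (Ideal.span t) ^ N := by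
  induction N with
  | zero =>
    rw [pow_zero, pow_zero, Ideal.one_eq_top, ← Set.singleton_one, Ideal.span_singleton_one]
  | succ n ih => rw [pow_succ, pow_succ, ← ih, ← Ideal.span_mul_span']

section Machine

variable (I J : Ideal (MvPolynomial (Fin m) K)) (s : Finset (MvPolynomial (Fin m) K))

variable (p) in
/-- the ideal `J^{[p^e]}` -/
noncomputable def AA (e : ℕ) : Ideal (MvPolynomial (Fin m) K) := frobeniusPower J (p ^ e)

variable (p) in
/-- `g · I^n ⊆ J^{[p^e]}` -/
def Good (g : MvPolynomial (Fin m) K) (n e : ℕ) : Prop :=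
  ∀ u ∈ I ^ n, g * u ∈ AA p J e

variable (p) in
/-- the set whose sup is `ν_g(p^e)` -/
def SSet (g : MvPolynomial (Fin m) K) (e : ℕ) : Set ℕ := {n | ¬ Good p I J g n e}

variable (p) in
noncomputable def nug (g : MvPolynomial (Fin m) K) (e : ℕ) : ℕ := sSup (SSet p I J g e)

variable (p) in
noncomputable def prodc (c : {x // x ∈ s} → Fin p) : MvPolynomial (Fin m) K :=
  ∏ y ∈ s.attach, (y : MvPolynomial (Fin m) K) ^ (c y : ℕ)

variable (p) in
def wt (c : {x // x ∈ s} → Fin p) : ℕ := ∑ y ∈ s.attach, (c y : ℕ)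

variable (p) in
noncomputable def step (g : MvPolynomial (Fin m) K) (c : {x // x ∈ s} → Fin p)
    (a : Fin m → Fin p) : MvPolynomial (Fin m) K :=
  pia a (g * prodc p s c)

variable (hs : Ideal.span ↑s = I)

lemma good_mono {g : MvPolynomial (Fin m) K} {n n' e : ℕ} (h : Good p I J g n e) (hn : n ≤ n') :
    Good p I J g n' e := by
  intro u hu
  exact h u (Ideal.pow_le_pow_right hn hu)

lemma good_one_imp {g : MvPolynomial (Fin m) K} {n e : ℕ} (h : Good p I J 1 n e) :
    Good p I J g n e := by
  intro u hu
  have := h u hu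
  rw [one_mul] at this
  exact Ideal.mul_mem_left _ g this

lemma sset_down {g : MvPolynomial (Fin m) K} {n n' e : ℕ} (h : n ∈ SSet p I J g e)
    (hn : n' ≤ n) : n' ∈ SSet p I J g e :=
  fun hg => h (good_mono I J hg hn)

lemma sset_sub_one (g : MvPolynomial (Fin m) K) (e : ℕ) : SSet p I J g e ⊆ SSet p I J 1 e :=
  fun _ h hg => h (good_one_imp I J hg)

include hs in
/-- The key recursion, consequence of freeness of the Frobenius. -/
lemma good_rec (g : MvPolynomial (Fin m) K) (N e : ℕ) :
    Good p I J g N (e + 1) ↔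
      ∀ (c : {x // x ∈ s} → Fin p) (a : Fin m → Fin p) (n' : ℕ),
        N = p * n' + wt p s c → Good p I J (step p s g c a) n' e := by
  constructor
  · intro hG c a n' hN u hu
    have h1 : u ^ p ∈ I ^ (p * n') := by
      have h := Ideal.pow_mem_pow hu p
      rwa [← pow_mul, mul_comm n' p] at h
    have h2 : prodc p s c ∈ I ^ wt p s c := by
      refine prod_pow_mem I s.attach _ _ fun y _ => ?_
      exact Ideal.pow_mem_pow (hs ▸ Ideal.subset_span y.2) _
    have hu' : u ^ p * prodc p s c ∈ I ^ N := by
      rw [hN, pow_add]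
      exact Ideal.mul_mem_mul h1 h2
    have hmem : g * (u ^ p * prodc p s c) ∈ AA p J (e + 1) := hG _ hu'
    rw [AA, fp_succ] at hmem
    have hcomp := (mem_fp_iff _ _).1 hmem a
    rw [show g * (u ^ p * prodc p s c) = u ^ p * (g * prodc p s c) by ring,
      pia_semilinear] at hcomp
    show step p s g c a * u ∈ AA p J e
    rw [show step p s g c a * u = u * pia a (g * prodc p s c) from by rw [step]; ring]
    exact hcomp
  · intro hyp u hu
    classical
    show g * u ∈ AA p J (e + 1)
    rw [AA, fp_succ]
    have hspan : u ∈ Ideal.span ((↑s : Set (MvPolynomial (Fin m) K)) ^ N) := by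
      rw [span_set_pow, hs]
      exact hu
    clear hu
    refine Submodule.span_induction ?_ ?_ ?_ ?_ hspan
    · intro x hx
      obtain ⟨f, hxf⟩ := Set.mem_pow.1 hx
      rw [List.prod_ofFn] at hxf
      -- group the product according to the fibers over `s`
      set F : Fin N → MvPolynomial (Fin m) K := fun i => (f i : MvPolynomial (Fin m) K) with hF
      have hFs : ∀ i, F i ∈ s := fun i => (f i).2
      set cnt : MvPolynomial (Fin m) K → ℕ :=
        fun y => (Finset.univ.filter (fun i => F i = y)).card with hcnt
      have hgroup : x = ∏ y ∈ s, y ^ cnt y := by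
        rw [← hxf, ← Finset.prod_fiberwise_of_maps_to (fun i _ => hFs i) F]
        refine Finset.prod_congr rfl fun y _ => ?_
        rw [Finset.prod_congr rfl fun i hi => (Finset.mem_filter.1 hi).2,
          Finset.prod_const]
      have hNsum : N = ∑ y ∈ s, cnt y := by
        rw [← Finset.card_fin N, Finset.card_eq_sum_card_fiberwise (fun i _ => hFs i)]
      set c : {x // x ∈ s} → Fin p := fun y => ⟨cnt y.1 % p, Nat.mod_lt _ hpf.out.pos⟩ with hc
      set w : MvPolynomial (Fin m) K := ∏ y ∈ s.attach, (y : MvPolynomial (Fin m) K) ^ (cnt y.1 / p) with hw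
      set n' : ℕ := ∑ y ∈ s.attach, cnt y.1 / p with hn'
      have hx2 : x = w ^ p * prodc p s c := by
        rw [hgroup, ← Finset.prod_attach s (fun y => y ^ cnt y), hw, prodc,
          ← Finset.prod_pow, ← Finset.prod_mul_distrib]
        refine Finset.prod_congr rfl fun y _ => ?_
        rw [← pow_mul, ← pow_add]
        congr 1
        ring
        congr 1
        exact (Nat.div_add_mod' (cnt y.1) p).symm
      have hNeq : N = p * n' + wt p s c := by
        rw [hNsum, ← Finset.sum_attach s (fun y => cnt y), hn', wt, Finset.mul_sum,
          ← Finset.sum_add_distrib]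
        refine Finset.sum_congr rfl fun y _ => ?_
        show cnt y.1 = p * (cnt y.1 / p) + (cnt y.1 % p)
        exact (Nat.div_add_mod (cnt y.1) p).symm
      have hwmem : w ∈ I ^ n' := by
        refine prod_pow_mem I s.attach _ _ fun y _ => ?_
        exact Ideal.pow_mem_pow (hs ▸ Ideal.subset_span y.2) _
      rw [mem_fp_iff]
      intro a
      have hstep := hyp c a n' hNeq w hwmem
      rw [hx2, show g * (w ^ p * prodc p s c) = w ^ p * (g * prodc p s c) by ring,
        pia_semilinear]
      rw [show step p s g c a * w = w * pia a (g * prodc p s c) from by rw [step]; ring] at hstep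
      exact hstep
    · rw [mul_zero]
      exact Ideal.zero_mem _
    · intro x y _ _ ihx ihy
      rw [mul_add]
      exact Ideal.add_mem _ ihx ihy
    · intro r x _ ihx
      rw [smul_eq_mul, ← mul_assoc, mul_comm g r, mul_assoc]
      exact Ideal.mul_mem_left _ _ ihx

include hs in
lemma sset_rec (g : MvPolynomial (Fin m) K) (n e : ℕ) :
    n ∈ SSet p I J g (e + 1) ↔
      ∃ (c : {x // x ∈ s} → Fin p) (a : Fin m → Fin p) (n' : ℕ),
        n = p * n' + wt p s c ∧ n' ∈ SSet p I J (step p s g c a) e := by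
  simp only [SSet, Set.mem_setOf_eq]
  rw [good_rec I J s hs g n e]
  push_neg
  rfl


/-! ### Boundedness and basic facts about the `ν` numbers -/

variable (p) in
/-- the weight bound `W` -/
def Wb : ℕ := s.card * (p - 1)

lemma wt_le (c : {x // x ∈ s} → Fin p) : wt p s c ≤ Wb p s := by
  have h := Finset.sum_le_card_nsmul s.attach (fun y => ((c y : ℕ))) (p - 1)
    (fun y _ => by show (c y : ℕ) ≤ p - 1; have := (c y).2; omega)
  rw [Finset.card_attach, smul_eq_mul] at h
  exact h

include hs in
lemma sset_bdd (hIJ : I ≤ J.radical) (e : ℕ) : BddAbove (SSet p I J 1 e) := by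
  induction e with
  | zero =>
    obtain ⟨N₀, hN₀⟩ := Ideal.exists_pow_le_of_le_radical_of_fg hIJ (IsNoetherian.noetherian I)
    refine ⟨N₀, fun n hn => ?_⟩
    by_contra hlt
    push_neg at hlt
    refine hn fun u hu => ?_
    rw [one_mul]
    have h2 : I ^ n ≤ I ^ N₀ := Ideal.pow_le_pow_right (le_of_lt hlt)
    show u ∈ frobeniusPower J (p ^ 0)
    rw [fp_zero J p]
    exact hN₀ (h2 hu)
  | succ e ih =>
    obtain ⟨B, hB⟩ := ih
    refine ⟨p * B + Wb p s, fun n hn => ?_⟩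
    obtain ⟨c, a, n', rfl, hn'⟩ := (sset_rec I J s hs 1 n e).1 hn
    have h1 : n' ≤ B := hB (sset_sub_one I J _ e hn')
    exact Nat.add_le_add (Nat.mul_le_mul_left p h1) (wt_le s c)

include hs in
lemma sset_bdd_g (hIJ : I ≤ J.radical) (g : MvPolynomial (Fin m) K) (e : ℕ) :
    BddAbove (SSet p I J g e) :=
  (sset_bdd I J s hs hIJ e).mono (sset_sub_one I J g e)

include hs in
lemma nug_le_nu1 (hIJ : I ≤ J.radical) (g : MvPolynomial (Fin m) K) (e : ℕ) :
    nug p I J g e ≤ nug p I J 1 e := by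
  by_cases hne : (SSet p I J g e).Nonempty
  · exact csSup_le_csSup (sset_bdd I J s hs hIJ e) hne (sset_sub_one I J g e)
  · rw [Set.not_nonempty_iff_eq_empty] at hne
    rw [nug, hne, csSup_empty]
    exact Nat.zero_le _

include hs in
lemma mem_sset_of_le (hIJ : I ≤ J.radical) {g : MvPolynomial (Fin m) K} {e n : ℕ}
    (hne : (SSet p I J g e).Nonempty) (hn : n ≤ nug p I J g e) : n ∈ SSet p I J g e :=
  sset_down I J (Nat.sSup_mem hne (sset_bdd_g I J s hs hIJ g e)) hn

include hs in
lemma le_nug_of_mem (hIJ : I ≤ J.radical) {g : MvPolynomial (Fin m) K} {e n : ℕ}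
    (hn : n ∈ SSet p I J g e) : n ≤ nug p I J g e :=
  le_csSup (sset_bdd_g I J s hs hIJ g e) hn

lemma sset_nonempty_of_pos {g : MvPolynomial (Fin m) K} {e : ℕ}
    (h : 1 ≤ nug p I J g e) : (SSet p I J g e).Nonempty := by
  by_contra hne
  rw [Set.not_nonempty_iff_eq_empty] at hne
  rw [nug, hne, csSup_empty] at h
  exact absurd h (by simp)

def zeroC : {x // x ∈ s} → Fin p := fun _ => ⟨0, hpf.out.pos⟩

def zeroA : Fin m → Fin p := fun _ => ⟨0, hpf.out.pos⟩

@[simp] lemma wt_zeroC : wt p s (zeroC s) = 0 := by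
  simp [wt, zeroC]

lemma step_one : step p s 1 (zeroC s) (zeroA (p := p) (m := m)) = 1 := by
  rw [step]
  have h1 : prodc p s (zeroC s) = 1 := by
    rw [prodc]
    refine Finset.prod_eq_one fun y _ => ?_
    simp [zeroC]
  rw [h1, mul_one]
  exact pia_one _ (fun i => rfl)

include hs in
lemma nu_lower (hIJ : I ≤ J.radical) (e : ℕ) :
    p * nug p I J 1 e ≤ nug p I J 1 (e + 1) := by
  by_cases hne : (SSet p I J 1 e).Nonempty
  · have hmem := Nat.sSup_mem hne (sset_bdd I J s hs hIJ e)
    have hmem2 : p * nug p I J 1 e + wt p s (zeroC s) ∈ SSet p I J 1 (e + 1) := by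
      refine (sset_rec I J s hs 1 _ e).2 ⟨zeroC s, zeroA, nug p I J 1 e, rfl, ?_⟩
      rw [step_one]
      exact hmem
    have h3 := le_nug_of_mem I J s hs hIJ hmem2
    rwa [wt_zeroC, add_zero] at h3
  · rw [Set.not_nonempty_iff_eq_empty] at hne
    rw [nug, hne, csSup_empty]
    exact Nat.zero_le _

include hs in
lemma nu_upper (hIJ : I ≤ J.radical) (e : ℕ) :
    nug p I J 1 (e + 1) ≤ p * nug p I J 1 e + Wb p s := by
  by_cases hne : (SSet p I J 1 (e + 1)).Nonempty
  · have hmem : nug p I J 1 (e + 1) ∈ SSet p I J 1 (e + 1) :=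
      Nat.sSup_mem hne (sset_bdd I J s hs hIJ (e + 1))
    obtain ⟨c, a, n', hEq, hn'⟩ := (sset_rec I J s hs 1 _ e).1 hmem
    have h1 : n' ≤ nug p I J 1 e :=
      (le_nug_of_mem I J s hs hIJ hn').trans (nug_le_nu1 I J s hs hIJ _ e)
    rw [hEq]
    exact Nat.add_le_add (Nat.mul_le_mul_left p h1) (wt_le s c)
  · rw [Set.not_nonempty_iff_eq_empty] at hne
    rw [nug, hne, csSup_empty]
    exact Nat.zero_le _

/-! ### The finite state space -/

variable (p) in
/-- the degree bound for multipliers -/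
def Dd : ℕ := Wb p s * s.sup MvPolynomial.totalDegree

include hpf in
lemma step_deg {g : MvPolynomial (Fin m) K} (hg : g.totalDegree ≤ Dd p s)
    (c : {x // x ∈ s} → Fin p) (a : Fin m → Fin p) :
    (step p s g c a).totalDegree ≤ Dd p s := by
  have h1 : (prodc p s c).totalDegree ≤ Dd p s := by
    refine (totalDegree_finset_prod _ _).trans ?_
    have hterm : ∀ y ∈ s.attach, ((y : MvPolynomial (Fin m) K) ^ (c y : ℕ)).totalDegree ≤
        (p - 1) * s.sup MvPolynomial.totalDegree := by
      intro y _
      refine (totalDegree_pow _ _).trans ?_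
      have hy : (y : MvPolynomial (Fin m) K).totalDegree ≤ s.sup MvPolynomial.totalDegree :=
        Finset.le_sup y.2
      have hc : (c y : ℕ) ≤ p - 1 := by have := (c y).2; omega
      exact Nat.mul_le_mul hc hy
    refine (Finset.sum_le_card_nsmul _ _ _ hterm).trans ?_
    rw [Finset.card_attach, smul_eq_mul, Dd, Wb]
    exact le_of_eq (mul_assoc _ _ _).symm
  have h2 : (g * prodc p s c).totalDegree ≤ Dd p s + Dd p s :=
    le_trans (totalDegree_mul _ _) (add_le_add hg h1)
  show (pia a (g * prodc p s c)).totalDegree ≤ Dd p s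
  refine (pia_totalDegree a _).trans ?_
  have h3 : (g * prodc p s c).totalDegree / p ≤ (Dd p s + Dd p s) / p :=
    Nat.div_le_div_right h2
  refine h3.trans ?_
  have hp2 : 2 ≤ p := hpf.out.two_le
  have h4 : (Dd p s + Dd p s) / p ≤ (Dd p s + Dd p s) / 2 :=
    Nat.div_le_div_left hp2 (by norm_num)
  refine h4.trans ?_
  omega

variable (p) in
/-- the finite state space of multipliers -/
def GT := {g : MvPolynomial (Fin m) K // g.totalDegree ≤ Dd p s}

instance : Finite (GT p s) := by
  classical
  have hfin : Finite {d : Fin m →₀ ℕ // (d.sum fun _ e => e) ≤ Dd p s} := by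
    refine Finite.of_injective (fun d => (fun i => (⟨d.1 i, ?_⟩ : Fin (Dd p s + 1)))) ?_
    · have h1 : d.1 i ≤ d.1.sum fun _ e => e := by
        by_cases hi : i ∈ d.1.support
        · rw [Finsupp.sum]
          exact Finset.single_le_sum (f := fun j => d.1 j) (fun j _ => Nat.zero_le _) hi
        · simp [Finsupp.notMem_support_iff.1 hi]
      have := d.2
      omega
    · intro d1 d2 h
      apply Subtype.ext
      ext i
      have h2 := congrFun h i
      simpa using congrArg Fin.val h2
  refine Finite.of_injective
    (fun g : GT p s => (fun d : {d : Fin m →₀ ℕ // (d.sum fun _ e => e) ≤ Dd p s} =>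
      MvPolynomial.coeff d.1 g.1)) ?_
  intro g1 g2 h
  apply Subtype.ext
  apply MvPolynomial.ext
  intro u
  by_cases hu : (u.sum fun _ e => e) ≤ Dd p s
  · exact congrFun h ⟨u, hu⟩
  · have husum : (u.sum fun _ e => e) = ∑ i ∈ u.support, u i := rfl
    rw [coeff_eq_zero_of_totalDegree_lt, coeff_eq_zero_of_totalDegree_lt]
    · have := g2.2
      omega
    · have := g1.2
      omega

noncomputable def stepG (g : GT p s) (c : {x // x ∈ s} → Fin p) (a : Fin m → Fin p) : GT p s :=
  ⟨step p s g.1 c a, step_deg s g.2 c a⟩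

noncomputable def oneG : GT p s := ⟨1, by simp [totalDegree_one]⟩

variable (p) in
/-- the truncated state -/
def sigma (e : ℕ) : GT p s × Fin (Wb p s + 1) → Prop :=
  fun gi => (nug p I J 1 e - (gi.2 : ℕ)) ∈ SSet p I J gi.1.1 e

lemma sigma_apply (e : ℕ) (g : GT p s) (i : Fin (Wb p s + 1)) :
    sigma p I J s e (g, i) = ((nug p I J 1 e - (i : ℕ)) ∈ SSet p I J g.1 e) := rfl

variable (p) in
/-- next increment, as read off the state -/
noncomputable def tfun (σ : GT p s × Fin (Wb p s + 1) → Prop) : ℕ :=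
  sSup {t | ∃ c, ∃ a, ∃ i : Fin (Wb p s + 1), t + p * (i : ℕ) = wt p s c ∧ σ (stepG s (oneG s) c a, i)}

variable (p) in
/-- next state, as read off the state -/
noncomputable def Ffun (σ : GT p s × Fin (Wb p s + 1) → Prop) :
    GT p s × Fin (Wb p s + 1) → Prop :=
  fun gj => ∃ c, ∃ a, ∃ i : Fin (Wb p s + 1),
    (gj.2 : ℕ) + wt p s c = tfun p s σ + p * (i : ℕ) ∧ σ (stepG s gj.1 c a, i)

lemma Ffun_apply (σ : GT p s × Fin (Wb p s + 1) → Prop) (g : GT p s) (j : Fin (Wb p s + 1)) :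
    Ffun p s σ (g, j) = (∃ c, ∃ a, ∃ i : Fin (Wb p s + 1),
      (j : ℕ) + wt p s c = tfun p s σ + p * (i : ℕ) ∧ σ (stepG s g c a, i)) := rfl

include hs in
lemma T1 (hIJ : I ≤ J.radical) (e : ℕ) (hν : Wb p s + 1 ≤ nug p I J 1 e) :
    nug p I J 1 (e + 1) = p * nug p I J 1 e + tfun p s (sigma p I J s e) := by
  have htfun : tfun p s (sigma p I J s e) = sSup {t | ∃ c, ∃ a, ∃ i : Fin (Wb p s + 1),
      t + p * (i : ℕ) = wt p s c ∧ sigma p I J s e (stepG s (oneG s) c a, i)} := rfl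
  have hbddT : BddAbove {t | ∃ c, ∃ a, ∃ i : Fin (Wb p s + 1),
      t + p * (i : ℕ) = wt p s c ∧ sigma p I J s e (stepG s (oneG s) c a, i)} := by
    refine ⟨Wb p s, fun t ht => ?_⟩
    obtain ⟨c, a, i, hteq, _⟩ := ht
    have := wt_le s c
    omega
  have hne : (SSet p I J 1 e).Nonempty := sset_nonempty_of_pos (p := p) I J (by omega)
  have hmem : nug p I J 1 e ∈ SSet p I J 1 e := Nat.sSup_mem hne (sset_bdd I J s hs hIJ e)
  have hA : ∀ t ∈ {t | ∃ c, ∃ a, ∃ i : Fin (Wb p s + 1),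
      t + p * (i : ℕ) = wt p s c ∧ sigma p I J s e (stepG s (oneG s) c a, i)},
      p * nug p I J 1 e + t ∈ SSet p I J 1 (e + 1) := by
    rintro t ⟨c, a, i, hteq, hmem'⟩
    have hiν : (i : ℕ) ≤ nug p I J 1 e := by have := i.2; omega
    rw [sigma_apply] at hmem'
    refine (sset_rec I J s hs 1 _ e).2 ⟨c, a, nug p I J 1 e - (i : ℕ), ?_, hmem'⟩
    have hd : p * (nug p I J 1 e - (i : ℕ)) + p * (i : ℕ) = p * nug p I J 1 e := by
      rw [← Nat.mul_add]
      congr 1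
      omega
    omega
  have h0T : (0 : ℕ) ∈ {t | ∃ c, ∃ a, ∃ i : Fin (Wb p s + 1),
      t + p * (i : ℕ) = wt p s c ∧ sigma p I J s e (stepG s (oneG s) c a, i)} := by
    refine ⟨zeroC s, zeroA, ⟨0, by omega⟩, by simp, ?_⟩
    rw [sigma_apply]
    show (nug p I J 1 e - (0 : ℕ)) ∈ SSet p I J (step p s 1 (zeroC s) zeroA) e
    rw [step_one, Nat.sub_zero]
    exact hmem
  have hTne : Set.Nonempty {t | ∃ c, ∃ a, ∃ i : Fin (Wb p s + 1),
      t + p * (i : ℕ) = wt p s c ∧ sigma p I J s e (stepG s (oneG s) c a, i)} := ⟨0, h0T⟩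
  have hTmem := Nat.sSup_mem hTne hbddT
  have hge : p * nug p I J 1 e + tfun p s (sigma p I J s e) ≤ nug p I J 1 (e + 1) := by
    rw [htfun]
    exact le_nug_of_mem I J s hs hIJ (hA _ hTmem)
  have hne1 : (SSet p I J 1 (e + 1)).Nonempty := ⟨p * nug p I J 1 e + 0, hA 0 h0T⟩
  have hmem1 : nug p I J 1 (e + 1) ∈ SSet p I J 1 (e + 1) :=
    Nat.sSup_mem hne1 (sset_bdd I J s hs hIJ (e + 1))
  obtain ⟨c, a, n', hEq, hn'⟩ := (sset_rec I J s hs 1 _ e).1 hmem1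
  have hn'le : n' ≤ nug p I J 1 e :=
    (le_nug_of_mem I J s hs hIJ hn').trans (nug_le_nu1 I J s hs hIJ _ e)
  have hlow : p * nug p I J 1 e + 0 ≤ nug p I J 1 (e + 1) :=
    le_nug_of_mem I J s hs hIJ (hA 0 h0T)
  have hwc := wt_le s c
  have hd : p * (nug p I J 1 e - n') + p * n' = p * nug p I J 1 e := by
    rw [← Nat.mul_add]
    congr 1
    omega
  have hp1 : 1 ≤ p := hpf.out.pos
  have hiW : nug p I J 1 e - n' ≤ Wb p s := by
    have h5 : p * (nug p I J 1 e - n') ≤ wt p s c := by omega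
    calc nug p I J 1 e - n' ≤ p * (nug p I J 1 e - n') := Nat.le_mul_of_pos_left _ hp1
      _ ≤ wt p s c := h5
      _ ≤ Wb p s := hwc
  have htT : nug p I J 1 (e + 1) - p * nug p I J 1 e ∈
      {t | ∃ c, ∃ a, ∃ i : Fin (Wb p s + 1),
      t + p * (i : ℕ) = wt p s c ∧ sigma p I J s e (stepG s (oneG s) c a, i)} := by
    refine ⟨c, a, ⟨nug p I J 1 e - n', by omega⟩, ?_, ?_⟩
    · show nug p I J 1 (e + 1) - p * nug p I J 1 e + p * (nug p I J 1 e - n') = wt p s c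
      omega
    · rw [sigma_apply]
      show (nug p I J 1 e - (nug p I J 1 e - n')) ∈ SSet p I J (step p s 1 c a) e
      have hn2 : nug p I J 1 e - (nug p I J 1 e - n') = n' := by omega
      rw [hn2]
      exact hn'
  have hle : nug p I J 1 (e + 1) - p * nug p I J 1 e ≤ tfun p s (sigma p I J s e) := by
    rw [htfun]
    exact le_csSup hbddT htT
  omega

include hs in
lemma T2 (hIJ : I ≤ J.radical) (e : ℕ) (hν : Wb p s + 1 ≤ nug p I J 1 e) :
    sigma p I J s (e + 1) = Ffun p s (sigma p I J s e) := by
  have hT1 := T1 (p := p) I J s hs hIJ e hν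
  have hup := nu_upper (p := p) I J s hs hIJ e
  have hTW : tfun p s (sigma p I J s e) ≤ Wb p s := by omega
  have hp1 : 1 ≤ p := hpf.out.pos
  have hp2 : 2 ≤ p := hpf.out.two_le
  have hνp : nug p I J 1 e ≤ p * nug p I J 1 e := Nat.le_mul_of_pos_left _ hp1
  funext gj
  obtain ⟨g, j⟩ := gj
  apply propext
  have hjW : (j : ℕ) ≤ Wb p s := by have := j.2; omega
  rw [sigma_apply, Ffun_apply]
  constructor
  · intro hmem
    obtain ⟨c, a, n', hEq, hn'⟩ := (sset_rec I J s hs g.1 _ e).1 hmem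
    have hn'le : n' ≤ nug p I J 1 e :=
      (le_nug_of_mem I J s hs hIJ hn').trans (nug_le_nu1 I J s hs hIJ _ e)
    have hwc := wt_le s c
    have hd : p * (nug p I J 1 e - n') + p * n' = p * nug p I J 1 e := by
      rw [← Nat.mul_add]
      congr 1
      omega
    have h2i : 2 * (nug p I J 1 e - n') ≤ p * (nug p I J 1 e - n') :=
      Nat.mul_le_mul_right _ hp2
    have hiW : nug p I J 1 e - n' ≤ Wb p s := by omega
    refine ⟨c, a, ⟨nug p I J 1 e - n', by omega⟩,
      (by show (j : ℕ) + wt p s c = tfun p s (sigma p I J s e) + p * (nug p I J 1 e - n')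
          omega), ?_⟩
    rw [sigma_apply]
    show (nug p I J 1 e - (nug p I J 1 e - n')) ∈ SSet p I J (step p s g.1 c a) e
    have hn2 : nug p I J 1 e - (nug p I J 1 e - n') = n' := by omega
    rw [hn2]
    exact hn'
  · rintro ⟨c, a, i, heq, hmem⟩
    rw [sigma_apply] at hmem
    have hiW : (i : ℕ) ≤ Wb p s := by have := i.2; omega
    have hiν : (i : ℕ) ≤ nug p I J 1 e := by omega
    have hd : p * (nug p I J 1 e - (i : ℕ)) + p * (i : ℕ) = p * nug p I J 1 e := by
      rw [← Nat.mul_add]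
      congr 1
      omega
    refine (sset_rec I J s hs g.1 _ e).2 ⟨c, a, nug p I J 1 e - (i : ℕ), ?_, hmem⟩
    omega


end Machine

end FThreshAux

/-- For ideals `I ⊆ √J` with `J` proper and `I` nonzero, the sequence `ν_I^J(p^e)/p^e`
converges, and its limit (the F-threshold of `I` with respect to `J`) is a rational
number. -/
theorem fThreshold_exists_and_is_rational
    (p : ℕ) (hp : p.Prime) (K : Type*) [Field K] [Fintype K] [CharP K p]
    (m : ℕ) (I J : Ideal (MvPolynomial (Fin m) K))
    (hJ : J ≠ ⊤) (hI : I ≠ ⊥) (hIJ : I ≤ J.radical) :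
    ∃ c : ℚ, Tendsto (fun e : ℕ => (nuIJ p I J e : ℝ) / (p : ℝ) ^ e) atTop (nhds (c : ℝ)) := by
  haveI := Fact.mk hp
  classical
  obtain ⟨s, hs⟩ := IsNoetherian.noetherian I
  -- identify `nuIJ` with the auxiliary `nug`
  have hnu : ∀ e, nuIJ p I J e = FThreshAux.nug p I J 1 e := by
    intro e
    unfold nuIJ FThreshAux.nug
    congr 1
    ext n
    simp only [FThreshAux.SSet, Set.mem_setOf_eq]
    have hIff : (I ^ n ≤ frobeniusPower J (p ^ e)) ↔ FThreshAux.Good p I J 1 n e := by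
      constructor
      · intro h u hu
        rw [one_mul]
        exact h hu
      · intro h u hu
        have h2 := h u hu
        rwa [one_mul] at h2
    rw [hIff]
  by_cases hzero : ∀ e, FThreshAux.nug p I J 1 e = 0
  · refine ⟨0, ?_⟩
    have hfun : (fun e : ℕ => (nuIJ p I J e : ℝ) / (p : ℝ) ^ e) = fun _ => (0 : ℝ) := by
      funext e
      rw [hnu e, hzero e]
      simp
    rw [hfun]
    simpa using (tendsto_const_nhds : Tendsto (fun _ : ℕ => (0:ℝ)) atTop (nhds 0))
  · push_neg at hzero
    obtain ⟨e₀, he₀⟩ := hzero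
    have hp1 : 1 ≤ p := hp.pos
    have hp2 : 2 ≤ p := hp.two_le
    set W := FThreshAux.Wb p s with hW
    -- ν is monotone and grows
    have hlow : ∀ e, p * FThreshAux.nug p I J 1 e ≤ FThreshAux.nug p I J 1 (e + 1) :=
      fun e => FThreshAux.nu_lower I J s hs hIJ e
    have hmono : Monotone (fun e => FThreshAux.nug p I J 1 e) := by
      apply monotone_nat_of_le_succ
      intro e
      have h1 := hlow e
      have h2 : FThreshAux.nug p I J 1 e ≤ p * FThreshAux.nug p I J 1 e :=
        Nat.le_mul_of_pos_left _ hp1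
      omega
    have hgrow : ∀ k, 2 ^ k ≤ FThreshAux.nug p I J 1 (e₀ + k) := by
      intro k
      induction k with
      | zero => simpa using Nat.one_le_iff_ne_zero.2 he₀
      | succ k ih =>
        have h1 := hlow (e₀ + k)
        have h2 : 2 * FThreshAux.nug p I J 1 (e₀ + k) ≤ p * FThreshAux.nug p I J 1 (e₀ + k) :=
          Nat.mul_le_mul_right _ hp2
        have h3 : e₀ + (k + 1) = (e₀ + k) + 1 := by ring
        rw [h3, pow_succ]
        omega
    set E₀ := e₀ + (W + 1) with hE₀
    have hLB : ∀ e, E₀ ≤ e → W + 1 ≤ FThreshAux.nug p I J 1 e := by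
      intro e he
      have h1 := hgrow (W + 1)
      rw [← hE₀] at h1
      have h2 : W + 1 < 2 ^ (W + 1) := Nat.lt_two_pow_self
      have h3 : FThreshAux.nug p I J 1 E₀ ≤ FThreshAux.nug p I J 1 e := hmono he
      omega
    -- pigeonhole on the finite state space
    obtain ⟨k₁, k₂, hk12, hkeq⟩ :=
      Finite.exists_ne_map_eq_of_infinite (fun k : ℕ => FThreshAux.sigma p I J s (E₀ + k))
    -- wlog k₁ < k₂
    obtain ⟨ka, kb, hklt, hkeq'⟩ : ∃ ka kb, ka < kb ∧
        FThreshAux.sigma p I J s (E₀ + ka) = FThreshAux.sigma p I J s (E₀ + kb) := by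
      rcases lt_or_gt_of_ne hk12 with h | h
      · exact ⟨k₁, k₂, h, hkeq⟩
      · exact ⟨k₂, k₁, h, hkeq.symm⟩
    set E₁ := E₀ + ka with hE₁
    set sp := kb - ka with hsp
    have hsp1 : 1 ≤ sp := by omega
    have hE₁sp : E₀ + kb = E₁ + sp := by omega
    -- states are periodic from E₁ on
    have hstate : ∀ k, FThreshAux.sigma p I J s (E₁ + k) = FThreshAux.sigma p I J s (E₁ + sp + k) := by
      intro k
      induction k with
      | zero =>
        rw [add_zero, add_zero, ← hE₁sp]
        exact hkeq'
      | succ k ih =>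
        have h1 : E₁ + (k + 1) = (E₁ + k) + 1 := by ring
        have h2 : E₁ + sp + (k + 1) = (E₁ + sp + k) + 1 := by ring
        rw [h1, h2, FThreshAux.T2 I J s hs hIJ _ (hLB _ (by omega)),
          FThreshAux.T2 I J s hs hIJ _ (hLB _ (by omega)), ih]
    -- the ℤ-valued recursion
    set N : ℕ → ℤ := fun e => (FThreshAux.nug p I J 1 e : ℤ) with hN
    have hrecZ : ∀ e, E₀ ≤ e →
        N (e + 1) = p * N e + (FThreshAux.tfun p s (FThreshAux.sigma p I J s e) : ℤ) := by
      intro e he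
      have h1 := FThreshAux.T1 (p := p) I J s hs hIJ e (hLB e he)
      show ((FThreshAux.nug p I J 1 (e + 1) : ℤ))
          = p * (FThreshAux.nug p I J 1 e : ℤ)
            + (FThreshAux.tfun p s (FThreshAux.sigma p I J s e) : ℤ)
      exact_mod_cast h1
    have hgen : ∀ i k, N (E₁ + sp + k + i) - p ^ i * N (E₁ + sp + k)
        = N (E₁ + k + i) - p ^ i * N (E₁ + k) := by
      intro i
      induction i with
      | zero =>
        intro k
        simp
      | succ i ih =>
        intro k
        have ht : FThreshAux.tfun p s (FThreshAux.sigma p I J s (E₁ + k + i))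
            = FThreshAux.tfun p s (FThreshAux.sigma p I J s (E₁ + sp + k + i)) := by
          have h3 : E₁ + k + i = E₁ + (k + i) := by ring
          have h4 : E₁ + sp + k + i = E₁ + sp + (k + i) := by ring
          rw [h3, h4, hstate (k + i)]
        have e1 : E₁ + sp + k + (i + 1) = (E₁ + sp + k + i) + 1 := by ring
        have e2 : E₁ + k + (i + 1) = (E₁ + k + i) + 1 := by ring
        rw [e1, e2, hrecZ _ (by omega), hrecZ _ (by omega), ← ht]
        linear_combination (p : ℤ) * (ih k)
    -- the cycle relation
    have hcyc : ∀ k, N (E₁ + (k + 1) * sp) - p ^ sp * N (E₁ + k * sp)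
        = N (E₁ + sp) - p ^ sp * N E₁ := by
      intro k
      induction k with
      | zero => simp
      | succ k ih =>
        have e1 : E₁ + (k + 1 + 1) * sp = E₁ + sp + k * sp + sp := by ring
        have e2 : E₁ + (k + 1) * sp = E₁ + sp + k * sp := by ring
        have e3 : E₁ + k * sp + sp = E₁ + (k + 1) * sp := by ring
        have h5 := hgen sp (k * sp)
        rw [e1, e2, h5, e3]
        exact ih
    -- the limit along the subsequence `e = E₁ + k·sp`
    have hQ1 : (1 : ℝ) < (p : ℝ) ^ sp := by
      refine one_lt_pow₀ ?_ (by omega)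
      exact_mod_cast hp.one_lt
    have hQ0 : (0 : ℝ) < (p : ℝ) ^ sp := lt_trans zero_lt_one hQ1
    have hQm1 : (p : ℝ) ^ sp - 1 ≠ 0 := by linarith
    have hpR : (0 : ℝ) < (p : ℝ) := by exact_mod_cast hp.pos
    have hu : ∀ k, N (E₁ + (k + 1) * sp) = p ^ sp * N (E₁ + k * sp)
        + (N (E₁ + sp) - p ^ sp * N E₁) := by
      intro k
      have h6 := hcyc k
      linarith
    have hclosed : ∀ k, (N (E₁ + k * sp) : ℝ)
        = ((N E₁ : ℝ) + ((N (E₁ + sp) : ℝ) - (p : ℝ) ^ sp * (N E₁ : ℝ)) / ((p : ℝ) ^ sp - 1))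
            * ((p : ℝ) ^ sp) ^ k
          - ((N (E₁ + sp) : ℝ) - (p : ℝ) ^ sp * (N E₁ : ℝ)) / ((p : ℝ) ^ sp - 1) := by
      intro k
      induction k with
      | zero => simp
      | succ k ih =>
        have hcast : (N (E₁ + (k + 1) * sp) : ℝ)
            = (p : ℝ) ^ sp * (N (E₁ + k * sp) : ℝ)
              + ((N (E₁ + sp) : ℝ) - (p : ℝ) ^ sp * (N E₁ : ℝ)) := by
          have h7 := hu k
          push_cast [h7]
          push_cast
          ring
        rw [hcast, ih]
        field_simp
        ring
    -- the subsequence of the normalized sequence converges to c₀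
    have hsub : ∀ k, (FThreshAux.nug p I J 1 (E₁ + k * sp) : ℝ) / (p : ℝ) ^ (E₁ + k * sp)
        = ((N E₁ : ℝ)
            + ((N (E₁ + sp) : ℝ) - (p : ℝ) ^ sp * (N E₁ : ℝ)) / ((p : ℝ) ^ sp - 1))
              / (p : ℝ) ^ E₁
          - (((N (E₁ + sp) : ℝ) - (p : ℝ) ^ sp * (N E₁ : ℝ)) / ((p : ℝ) ^ sp - 1))
              / (p : ℝ) ^ E₁ * (1 / (p : ℝ) ^ sp) ^ k := by
      intro k
      have hP : (p : ℝ) ^ (E₁ + k * sp) = (p : ℝ) ^ E₁ * ((p : ℝ) ^ sp) ^ k := by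
        rw [← pow_mul, ← pow_add, Nat.mul_comm k sp]
      have h1 : ((FThreshAux.nug p I J 1 (E₁ + k * sp) : ℝ)) = ((N (E₁ + k * sp) : ℝ)) := by
        simp [hN]
      rw [h1, hclosed k, hP]
      have hx : ((p : ℝ) ^ sp) ^ k ≠ 0 := by positivity
      have hy : (p : ℝ) ^ E₁ ≠ 0 := by positivity
      rw [div_pow, one_pow]
      field_simp
    have htend_sub : Tendsto
        (fun k => (FThreshAux.nug p I J 1 (E₁ + k * sp) : ℝ) / (p : ℝ) ^ (E₁ + k * sp))
        atTop (nhds (((N E₁ : ℝ)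
            + ((N (E₁ + sp) : ℝ) - (p : ℝ) ^ sp * (N E₁ : ℝ)) / ((p : ℝ) ^ sp - 1))
              / (p : ℝ) ^ E₁)) := by
      have h2 : Tendsto (fun k : ℕ => (1 / (p : ℝ) ^ sp) ^ k) atTop (nhds 0) := by
        refine tendsto_pow_atTop_nhds_zero_of_lt_one (by positivity) ?_
        rw [div_lt_one hQ0]
        exact hQ1
      have h3 := h2.const_mul ((((N (E₁ + sp) : ℝ) - (p : ℝ) ^ sp * (N E₁ : ℝ))
        / ((p : ℝ) ^ sp - 1)) / (p : ℝ) ^ E₁)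
      have h4 := (tendsto_const_nhds (x := ((N E₁ : ℝ)
            + ((N (E₁ + sp) : ℝ) - (p : ℝ) ^ sp * (N E₁ : ℝ)) / ((p : ℝ) ^ sp - 1))
              / (p : ℝ) ^ E₁) (f := atTop (α := ℕ))).sub h3
      rw [mul_zero, sub_zero] at h4
      refine Tendsto.congr ?_ h4
      intro k
      rw [hsub k]
    -- the full sequence is monotone
    have hamono : Monotone (fun e => (FThreshAux.nug p I J 1 e : ℝ) / (p : ℝ) ^ e) := by
      apply monotone_nat_of_le_succ
      intro e
      rw [div_le_div_iff₀ (by positivity) (by positivity)]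
      have h5 : (p * FThreshAux.nug p I J 1 e : ℕ) ≤ FThreshAux.nug p I J 1 (e + 1) := hlow e
      calc (FThreshAux.nug p I J 1 e : ℝ) * (p : ℝ) ^ (e + 1)
          = ((p * FThreshAux.nug p I J 1 e : ℕ) : ℝ) * (p : ℝ) ^ e := by push_cast; ring
        _ ≤ (FThreshAux.nug p I J 1 (e + 1) : ℝ) * (p : ℝ) ^ e := by
            refine mul_le_mul_of_nonneg_right ?_ (by positivity)
            exact_mod_cast h5
    have hφ : Tendsto (fun k : ℕ => E₁ + k * sp) atTop atTop := by
      refine tendsto_atTop_mono (fun k => ?_) tendsto_id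
      have h6 : k ≤ k * sp := Nat.le_mul_of_pos_right k (by omega)
      simp only [id_eq]
      omega
    rcases tendsto_of_monotone hamono with hTop | ⟨l, hl⟩
    · exfalso
      have h7 := hTop.comp hφ
      exact (not_tendsto_nhds_of_tendsto_atTop h7 _) htend_sub
    · have hlc : l = ((N E₁ : ℝ)
            + ((N (E₁ + sp) : ℝ) - (p : ℝ) ^ sp * (N E₁ : ℝ)) / ((p : ℝ) ^ sp - 1))
              / (p : ℝ) ^ E₁ := by
        have h8 : Tendsto
            (fun k => (FThreshAux.nug p I J 1 (E₁ + k * sp) : ℝ) / (p : ℝ) ^ (E₁ + k * sp))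
            atTop (nhds l) := hl.comp hφ
        exact tendsto_nhds_unique h8 htend_sub
      refine ⟨((FThreshAux.nug p I J 1 E₁ : ℚ)
          + ((FThreshAux.nug p I J 1 (E₁ + sp) : ℚ)
            - (p : ℚ) ^ sp * (FThreshAux.nug p I J 1 E₁ : ℚ)) / ((p : ℚ) ^ sp - 1))
              / (p : ℚ) ^ E₁, ?_⟩
      have hfun : (fun e : ℕ => (nuIJ p I J e : ℝ) / (p : ℝ) ^ e)
          = fun e => (FThreshAux.nug p I J 1 e : ℝ) / (p : ℝ) ^ e :=
        funext fun e => by rw [hnu e]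
      rw [hfun]
      have hQm1' : ((p : ℚ) ^ sp - 1 : ℚ) ≠ 0 := by
        have : (1 : ℚ) < (p : ℚ) ^ sp := by
          refine one_lt_pow₀ ?_ (by omega)
          exact_mod_cast hp.one_lt
        linarith
      have hcast : ((((FThreshAux.nug p I J 1 E₁ : ℚ)
          + ((FThreshAux.nug p I J 1 (E₁ + sp) : ℚ)
            - (p : ℚ) ^ sp * (FThreshAux.nug p I J 1 E₁ : ℚ)) / ((p : ℚ) ^ sp - 1))
              / (p : ℚ) ^ E₁ : ℚ) : ℝ)
          = ((N E₁ : ℝ)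
            + ((N (E₁ + sp) : ℝ) - (p : ℝ) ^ sp * (N E₁ : ℝ)) / ((p : ℝ) ^ sp - 1))
              / (p : ℝ) ^ E₁ := by
        have hN1 : (N E₁ : ℝ) = ((FThreshAux.nug p I J 1 E₁ : ℕ) : ℝ) := by simp [hN]
        have hN2 : (N (E₁ + sp) : ℝ) = ((FThreshAux.nug p I J 1 (E₁ + sp) : ℕ) : ℝ) := by
          simp [hN]
        rw [hN1, hN2]
        push_cast
        ring
      rw [hcast, ← hlc]
      exact hl
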